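/- The discriminant Δ(x) of Q(x,y) viewed as a quadratic polynomial in y equals 16·P₁(x)·P₂(x), where P₁(x) = s²x² + (-g²r² + s⁴ - s²h² - p²s² + p²r² - p²h² + g²h² - g²s² - s²r²)x + p⁴h² - p²h²g² + r²h²s² - p²h²s² + r⁴g² - p²r²h² + p²g²s² + p²h⁴ - p²g²r² + r²g⁴ - r²g²h² - r²g²s² and P₂(x) = q²x² + (-r²q² - q²f² - r²c² - p²f² + c²f² + q⁴ - c²q² - q²p² + p²r²)x + r⁴c² - r²c²p² - f²r²c² - p²f²c² - p²f²r² - c²q²r² - p²f²q² + r²c⁴ + q²f²r² + p⁴f² + p²f⁴ + q²c²p². -/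
import Mathlib

set_option maxHeartbeats 1000000 in
set_option maxRecDepth 8000 in
private theorem my_det_fin_4 (M : Matrix (Fin 4) (Fin 4) ℝ) :
    M.det = M 0 0 * M 1 1 * M 2 2 * M 3 3 - M 0 0 * M 1 1 * M 2 3 * M 3 2 - M 0 0 * M 1 2 * M 2 1 * M 3 3 + M 0 0 * M 1 2 * M 2 3 * M 3 1 + M 0 0 * M 1 3 * M 2 1 * M 3 2 - M 0 0 * M 1 3 * M 2 2 * M 3 1 - M 0 1 * M 1 0 * M 2 2 * M 3 3 + M 0 1 * M 1 0 * M 2 3 * M 3 2 + M 0 1 * M 1 2 * M 2 0 * M 3 3 - M 0 1 * M 1 2 * M 2 3 * M 3 0 - M 0 1 * M 1 3 * M 2 0 * M 3 2 + M 0 1 * M 1 3 * M 2 2 * M 3 0 + M 0 2 * M 1 0 * M 2 1 * M 3 3 - M 0 2 * M 1 0 * M 2 3 * M 3 1 - M 0 2 * M 1 1 * M 2 0 * M 3 3 + M 0 2 * M 1 1 * M 2 3 * M 3 0 + M 0 2 * M 1 3 * M 2 0 * M 3 1 - M 0 2 * M 1 3 * M 2 1 * M 3 0 - M 0 3 * M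 1 0 * M 2 1 * M 3 2 + M 0 3 * M 1 0 * M 2 2 * M 3 1 + M 0 3 * M 1 1 * M 2 0 * M 3 2 - M 0 3 * M 1 1 * M 2 2 * M 3 0 - M 0 3 * M 1 2 * M 2 0 * M 3 1 + M 0 3 * M 1 2 * M 2 1 * M 3 0 := by
  rw [Matrix.det_succ_row_zero]
  simp only [Fin.sum_univ_succ, Fin.sum_univ_zero, Matrix.det_fin_three, Matrix.submatrix_apply,
    (show ((0:Fin 4).succAbove 0) = 1 from rfl), (show ((0:Fin 4).succAbove 1) = 2 from rfl), (show ((0:Fin 4).succAbove 2) = 3 from rfl), (show ((1:Fin 4).succAbove 0) = 0 from rfl), (show ((1:Fin 4).succAbove 1) = 2 from rfl), (show ((1:Fin 4).succAbove 2) = 3 from rfl), (show ((2:Fin 4).succAbove 0) = 0 from rfl), (show ((2:Fin 4).succAbove 1) = 1 from rfl), (show ((2:Fin 4).succAbove 2) = 3 from rfl), (show ((3:Fin 4).succAbove 0) = 0 from rfl), (show ((3:Fin 4).succAbove 1) = 1 from rfl), (show ((3:Fin 4).succAbove 2) = 2 from rfl), (show (Fin.succ (0:Fin 1)) = 1 from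 rfl), (show (Fin.succ (0:Fin 2)) = 1 from rfl), (show (Fin.succ (1:Fin 2)) = 2 from rfl), (show (Fin.succ (0:Fin 3)) = 1 from rfl), (show (Fin.succ (1:Fin 3)) = 2 from rfl), (show (Fin.succ (2:Fin 3)) = 3 from rfl), (show ((0:Fin 4):ℕ) = 0 from rfl), (show ((1:Fin 4):ℕ) = 1 from rfl), (show ((2:Fin 4):ℕ) = 2 from rfl), (show ((3:Fin 4):ℕ) = 3 from rfl)]
  ring

set_option maxHeartbeats 1000000 in
set_option maxRecDepth 8000 in
private theorem my_det_fin_5 (M : Matrix (Fin 5) (Fin 5) ℝ) :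
    M.det = M 0 0 * M 1 1 * M 2 2 * M 3 3 * M 4 4 - M 0 0 * M 1 1 * M 2 2 * M 3 4 * M 4 3 - M 0 0 * M 1 1 * M 2 3 * M 3 2 * M 4 4 + M 0 0 * M 1 1 * M 2 3 * M 3 4 * M 4 2 + M 0 0 * M 1 1 * M 2 4 * M 3 2 * M 4 3 - M 0 0 * M 1 1 * M 2 4 * M 3 3 * M 4 2 - M 0 0 * M 1 2 * M 2 1 * M 3 3 * M 4 4 + M 0 0 * M 1 2 * M 2 1 * M 3 4 * M 4 3 + M 0 0 * M 1 2 * M 2 3 * M 3 1 * M 4 4 - M 0 0 * M 1 2 * M 2 3 * M 3 4 * M 4 1 - M 0 0 * M 1 2 * M 2 4 * M 3 1 * M 4 3 + M 0 0 * M 1 2 * M 2 4 * M 3 3 * M 4 1 + M 0 0 * M 1 3 * M 2 1 * M 3 2 * M 4 4 - M 0 0 * M 1 3 * M 2 1 * M 3 4 * M 4 2 - M 0 0 * M 1 3 * M 2 2 * M 3 1 * M 4 4 + M 0 0 * M 1 3 * M 2 2 * M 3 4 * M 4 1 + M 0 0 * M 1 3 * M 2 4 * M 3 1 * M 4 2 -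 M 0 0 * M 1 3 * M 2 4 * M 3 2 * M 4 1 - M 0 0 * M 1 4 * M 2 1 * M 3 2 * M 4 3 + M 0 0 * M 1 4 * M 2 1 * M 3 3 * M 4 2 + M 0 0 * M 1 4 * M 2 2 * M 3 1 * M 4 3 - M 0 0 * M 1 4 * M 2 2 * M 3 3 * M 4 1 - M 0 0 * M 1 4 * M 2 3 * M 3 1 * M 4 2 + M 0 0 * M 1 4 * M 2 3 * M 3 2 * M 4 1 - M 0 1 * M 1 0 * M 2 2 * M 3 3 * M 4 4 + M 0 1 * M 1 0 * M 2 2 * M 3 4 * M 4 3 + M 0 1 * M 1 0 * M 2 3 * M 3 2 * M 4 4 - M 0 1 * M 1 0 * M 2 3 * M 3 4 * M 4 2 - M 0 1 * M 1 0 * M 2 4 * M 3 2 * M 4 3 + M 0 1 * M 1 0 * M 2 4 * M 3 3 * M 4 2 + M 0 1 * M 1 2 * M 2 0 * M 3 3 * M 4 4 - M 0 1 * M 1 2 * M 2 0 * M 3 4 * M 4 3 - M 0 1 * M 1 2 * M 2 3 * M 3 0 * M 4 4 + M 0 1 * M 1 2 * M 2 3 * M 3 4 * M 4 0 + M 0 1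 * M 1 2 * M 2 4 * M 3 0 * M 4 3 - M 0 1 * M 1 2 * M 2 4 * M 3 3 * M 4 0 - M 0 1 * M 1 3 * M 2 0 * M 3 2 * M 4 4 + M 0 1 * M 1 3 * M 2 0 * M 3 4 * M 4 2 + M 0 1 * M 1 3 * M 2 2 * M 3 0 * M 4 4 - M 0 1 * M 1 3 * M 2 2 * M 3 4 * M 4 0 - M 0 1 * M 1 3 * M 2 4 * M 3 0 * M 4 2 + M 0 1 * M 1 3 * M 2 4 * M 3 2 * M 4 0 + M 0 1 * M 1 4 * M 2 0 * M 3 2 * M 4 3 - M 0 1 * M 1 4 * M 2 0 * M 3 3 * M 4 2 - M 0 1 * M 1 4 * M 2 2 * M 3 0 * M 4 3 + M 0 1 * M 1 4 * M 2 2 * M 3 3 * M 4 0 + M 0 1 * M 1 4 * M 2 3 * M 3 0 * M 4 2 - M 0 1 * M 1 4 * M 2 3 * M 3 2 * M 4 0 + M 0 2 * M 1 0 * M 2 1 * M 3 3 * M 4 4 - M 0 2 * M 1 0 * M 2 1 * M 3 4 * M 4 3 - M 0 2 * M 1 0 * M 2 3 * M 3 1 * M 4 4 + M 0 2 * M 1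 0 * M 2 3 * M 3 4 * M 4 1 + M 0 2 * M 1 0 * M 2 4 * M 3 1 * M 4 3 - M 0 2 * M 1 0 * M 2 4 * M 3 3 * M 4 1 - M 0 2 * M 1 1 * M 2 0 * M 3 3 * M 4 4 + M 0 2 * M 1 1 * M 2 0 * M 3 4 * M 4 3 + M 0 2 * M 1 1 * M 2 3 * M 3 0 * M 4 4 - M 0 2 * M 1 1 * M 2 3 * M 3 4 * M 4 0 - M 0 2 * M 1 1 * M 2 4 * M 3 0 * M 4 3 + M 0 2 * M 1 1 * M 2 4 * M 3 3 * M 4 0 + M 0 2 * M 1 3 * M 2 0 * M 3 1 * M 4 4 - M 0 2 * M 1 3 * M 2 0 * M 3 4 * M 4 1 - M 0 2 * M 1 3 * M 2 1 * M 3 0 * M 4 4 + M 0 2 * M 1 3 * M 2 1 * M 3 4 * M 4 0 + M 0 2 * M 1 3 * M 2 4 * M 3 0 * M 4 1 - M 0 2 * M 1 3 * M 2 4 * M 3 1 * M 4 0 - M 0 2 * M 1 4 * M 2 0 * M 3 1 * M 4 3 + M 0 2 * M 1 4 * M 2 0 * M 3 3 * M 4 1 + M 0 2 * M 1 4 * M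 2 1 * M 3 0 * M 4 3 - M 0 2 * M 1 4 * M 2 1 * M 3 3 * M 4 0 - M 0 2 * M 1 4 * M 2 3 * M 3 0 * M 4 1 + M 0 2 * M 1 4 * M 2 3 * M 3 1 * M 4 0 - M 0 3 * M 1 0 * M 2 1 * M 3 2 * M 4 4 + M 0 3 * M 1 0 * M 2 1 * M 3 4 * M 4 2 + M 0 3 * M 1 0 * M 2 2 * M 3 1 * M 4 4 - M 0 3 * M 1 0 * M 2 2 * M 3 4 * M 4 1 - M 0 3 * M 1 0 * M 2 4 * M 3 1 * M 4 2 + M 0 3 * M 1 0 * M 2 4 * M 3 2 * M 4 1 + M 0 3 * M 1 1 * M 2 0 * M 3 2 * M 4 4 - M 0 3 * M 1 1 * M 2 0 * M 3 4 * M 4 2 - M 0 3 * M 1 1 * M 2 2 * M 3 0 * M 4 4 + M 0 3 * M 1 1 * M 2 2 * M 3 4 * M 4 0 + M 0 3 * M 1 1 * M 2 4 * M 3 0 * M 4 2 - M 0 3 * M 1 1 * M 2 4 * M 3 2 * M 4 0 - M 0 3 * M 1 2 * M 2 0 * M 3 1 * M 4 4 + M 0 3 * M 1 2 * M 2 0 *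 M 3 4 * M 4 1 + M 0 3 * M 1 2 * M 2 1 * M 3 0 * M 4 4 - M 0 3 * M 1 2 * M 2 1 * M 3 4 * M 4 0 - M 0 3 * M 1 2 * M 2 4 * M 3 0 * M 4 1 + M 0 3 * M 1 2 * M 2 4 * M 3 1 * M 4 0 + M 0 3 * M 1 4 * M 2 0 * M 3 1 * M 4 2 - M 0 3 * M 1 4 * M 2 0 * M 3 2 * M 4 1 - M 0 3 * M 1 4 * M 2 1 * M 3 0 * M 4 2 + M 0 3 * M 1 4 * M 2 1 * M 3 2 * M 4 0 + M 0 3 * M 1 4 * M 2 2 * M 3 0 * M 4 1 - M 0 3 * M 1 4 * M 2 2 * M 3 1 * M 4 0 + M 0 4 * M 1 0 * M 2 1 * M 3 2 * M 4 3 - M 0 4 * M 1 0 * M 2 1 * M 3 3 * M 4 2 - M 0 4 * M 1 0 * M 2 2 * M 3 1 * M 4 3 + M 0 4 * M 1 0 * M 2 2 * M 3 3 * M 4 1 + M 0 4 * M 1 0 * M 2 3 * M 3 1 * M 4 2 - M 0 4 * M 1 0 * M 2 3 * M 3 2 * M 4 1 - M 0 4 * M 1 1 * M 2 0 * M 3 2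 * M 4 3 + M 0 4 * M 1 1 * M 2 0 * M 3 3 * M 4 2 + M 0 4 * M 1 1 * M 2 2 * M 3 0 * M 4 3 - M 0 4 * M 1 1 * M 2 2 * M 3 3 * M 4 0 - M 0 4 * M 1 1 * M 2 3 * M 3 0 * M 4 2 + M 0 4 * M 1 1 * M 2 3 * M 3 2 * M 4 0 + M 0 4 * M 1 2 * M 2 0 * M 3 1 * M 4 3 - M 0 4 * M 1 2 * M 2 0 * M 3 3 * M 4 1 - M 0 4 * M 1 2 * M 2 1 * M 3 0 * M 4 3 + M 0 4 * M 1 2 * M 2 1 * M 3 3 * M 4 0 + M 0 4 * M 1 2 * M 2 3 * M 3 0 * M 4 1 - M 0 4 * M 1 2 * M 2 3 * M 3 1 * M 4 0 - M 0 4 * M 1 3 * M 2 0 * M 3 1 * M 4 2 + M 0 4 * M 1 3 * M 2 0 * M 3 2 * M 4 1 + M 0 4 * M 1 3 * M 2 1 * M 3 0 * M 4 2 - M 0 4 * M 1 3 * M 2 1 * M 3 2 * M 4 0 - M 0 4 * M 1 3 * M 2 2 * M 3 0 * M 4 1 + M 0 4 * M 1 3 * M 2 2 * M 3 1 * M 4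 0 := by
  rw [Matrix.det_succ_row_zero]
  simp only [Fin.sum_univ_succ, Fin.sum_univ_zero, my_det_fin_4, Matrix.submatrix_apply,
    (show ((0:Fin 5).succAbove 0) = 1 from rfl), (show ((0:Fin 5).succAbove 1) = 2 from rfl), (show ((0:Fin 5).succAbove 2) = 3 from rfl), (show ((0:Fin 5).succAbove 3) = 4 from rfl), (show ((1:Fin 5).succAbove 0) = 0 from rfl), (show ((1:Fin 5).succAbove 1) = 2 from rfl), (show ((1:Fin 5).succAbove 2) = 3 from rfl), (show ((1:Fin 5).succAbove 3) = 4 from rfl), (show ((2:Fin 5).succAbove 0) = 0 from rfl), (show ((2:Fin 5).succAbove 1) = 1 from rfl), (show ((2:Fin 5).succAbove 2) = 3 from rfl), (show ((2:Fin 5).succAbove 3) = 4 from rfl), (show ((3:Fin 5).succAbove 0) = 0 from rfl), (show ((3:Fin 5).succAbove 1) = 1 from rfl), (show ((3:Fin 5).succAbove 2) = 2 from rfl), (show ((3:Fin 5).succAbove 3) = 4 from rfl), (show ((4:Fin 5).succAbove 0) = 0 from rfl), (show ((4:Fin 5).succAbove 1) = 1 from rfl), (show ((4:Fin 5).succAbove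 2) = 2 from rfl), (show ((4:Fin 5).succAbove 3) = 3 from rfl), (show (Fin.succ (0:Fin 1)) = 1 from rfl), (show (Fin.succ (0:Fin 2)) = 1 from rfl), (show (Fin.succ (1:Fin 2)) = 2 from rfl), (show (Fin.succ (0:Fin 3)) = 1 from rfl), (show (Fin.succ (1:Fin 3)) = 2 from rfl), (show (Fin.succ (2:Fin 3)) = 3 from rfl), (show (Fin.succ (0:Fin 4)) = 1 from rfl), (show (Fin.succ (1:Fin 4)) = 2 from rfl), (show (Fin.succ (2:Fin 4)) = 3 from rfl), (show (Fin.succ (3:Fin 4)) = 4 from rfl), (show ((0:Fin 5):ℕ) = 0 from rfl), (show ((1:Fin 5):ℕ) = 1 from rfl), (show ((2:Fin 5):ℕ) = 2 from rfl), (show ((3:Fin 5):ℕ) = 3 from rfl), (show ((4:Fin 5):ℕ) = 4 from rfl)]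
  ring

private theorem my_cons_val_five {α : Type*} {m : ℕ} (x : α) (u : Fin (m+5) → α) :
    Matrix.vecCons x u 5 =
      Matrix.vecHead (Matrix.vecTail (Matrix.vecTail (Matrix.vecTail (Matrix.vecTail u)))) :=
  rfl

set_option maxHeartbeats 4000000 in
set_option maxRecDepth 8000 in
theorem cayley_menger_discriminant_factorization
    (p q r s c f g h : ℝ)
    (hp : 0 < p) (hq : 0 < q) (hr : 0 < r) (hs : 0 < s)
    (hc : 0 < c) (hf : 0 < f) (hg : 0 < g) (hh : 0 < h) :
    ∃ A₂ A₁ A₀ : ℝ → ℝ,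
      (∀ x y : ℝ,
        -(Matrix.det !![(0 : ℝ), 1, 1, 1, 1, 1;
                        1, 0, p ^ 2, q ^ 2, r ^ 2, s ^ 2;
                        1, p ^ 2, 0, c ^ 2, x, g ^ 2;
                        1, q ^ 2, c ^ 2, 0, f ^ 2, y;
                        1, r ^ 2, x, f ^ 2, 0, h ^ 2;
                        1, s ^ 2, g ^ 2, y, h ^ 2, 0]) =
          A₂ x * y ^ 2 + A₁ x * y + A₀ x) ∧
      (∀ x : ℝ, (A₁ x) ^ 2 - 4 * A₂ x * A₀ x =
        16 *
        (s ^ 2 * x ^ 2 +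
          (-g ^ 2 * r ^ 2 + s ^ 4 - s ^ 2 * h ^ 2 - p ^ 2 * s ^ 2 + p ^ 2 * r ^ 2
            - p ^ 2 * h ^ 2 + g ^ 2 * h ^ 2 - g ^ 2 * s ^ 2 - s ^ 2 * r ^ 2) * x +
          (p ^ 4 * h ^ 2 - p ^ 2 * h ^ 2 * g ^ 2 + r ^ 2 * h ^ 2 * s ^ 2
            - p ^ 2 * h ^ 2 * s ^ 2 + r ^ 4 * g ^ 2 - p ^ 2 * r ^ 2 * h ^ 2
            + p ^ 2 * g ^ 2 * s ^ 2 + p ^ 2 * h ^ 4 - p ^ 2 * g ^ 2 * r ^ 2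
            + r ^ 2 * g ^ 4 - r ^ 2 * g ^ 2 * h ^ 2 - r ^ 2 * g ^ 2 * s ^ 2)) *
        (q ^ 2 * x ^ 2 +
          (-r ^ 2 * q ^ 2 - q ^ 2 * f ^ 2 - r ^ 2 * c ^ 2 - p ^ 2 * f ^ 2
            + c ^ 2 * f ^ 2 + q ^ 4 - c ^ 2 * q ^ 2 - q ^ 2 * p ^ 2 + p ^ 2 * r ^ 2) * x +
          (r ^ 4 * c ^ 2 - r ^ 2 * c ^ 2 * p ^ 2 - f ^ 2 * r ^ 2 * c ^ 2
            - p ^ 2 * f ^ 2 * c ^ 2 - p ^ 2 * f ^ 2 * r ^ 2 - c ^ 2 * q ^ 2 * r ^ 2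
            - p ^ 2 * f ^ 2 * q ^ 2 + r ^ 2 * c ^ 4 + q ^ 2 * f ^ 2 * r ^ 2
            + p ^ 4 * f ^ 2 + p ^ 2 * f ^ 4 + q ^ 2 * c ^ 2 * p ^ 2))) := by
  refine ⟨fun x => p ^ 4 - 2 * p ^ 2 * r ^ 2 - 2 * p ^ 2 * x + r ^ 4 - 2 * r ^ 2 * x + x ^ 2,
    fun x => - 2 * p ^ 4 * f ^ 2 - 2 * p ^ 4 * h ^ 2 - 2 * p ^ 2 * q ^ 2 * g ^ 2 + 2 * p ^ 2 * q ^ 2 * h ^ 2 + 2 * p ^ 2 * q ^ 2 * x + 2 * p ^ 2 * r ^ 2 * c ^ 2 + 2 * p ^ 2 * r ^ 2 * f ^ 2 + 2 * p ^ 2 * r ^ 2 * g ^ 2 + 2 * p ^ 2 * r ^ 2 * h ^ 2 - 4 * p ^ 2 * r ^ 2 * x - 2 * p ^ 2 * s ^ 2 * c ^ 2 + 2 * p ^ 2 * s ^ 2 * f ^ 2 + 2 * p ^ 2 * s ^ 2 * x + 2 * p ^ 2 * c ^ 2 * h ^ 2 + 2 * p ^ 2 * f ^ 2 * g ^ 2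 - 4 * p ^ 2 * f ^ 2 * h ^ 2 + 2 * p ^ 2 * f ^ 2 * x + 2 * p ^ 2 * h ^ 2 * x + 2 * q ^ 2 * r ^ 2 * g ^ 2 - 2 * q ^ 2 * r ^ 2 * h ^ 2 + 2 * q ^ 2 * r ^ 2 * x - 4 * q ^ 2 * s ^ 2 * x + 2 * q ^ 2 * g ^ 2 * x + 2 * q ^ 2 * h ^ 2 * x - 2 * q ^ 2 * x ^ 2 - 2 * r ^ 4 * c ^ 2 - 2 * r ^ 4 * g ^ 2 + 2 * r ^ 2 * s ^ 2 * c ^ 2 - 2 * r ^ 2 * s ^ 2 * f ^ 2 + 2 * r ^ 2 * s ^ 2 * x - 4 * r ^ 2 * c ^ 2 * g ^ 2 + 2 * r ^ 2 * c ^ 2 * h ^ 2 + 2 * r ^ 2 * c ^ 2 * x + 2 * r ^ 2 * f ^ 2 * g ^ 2 + 2 * r ^ 2 * g ^ 2 * x + 2 * s ^ 2 * c ^ 2 * x + 2 * s ^ 2 * f ^ 2 * x - 2 * s ^ 2 * x ^ 2 - 2 * c ^ 2 * h ^ 2 * x - 2 * f ^ 2 * g ^ 2 * x,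
    fun x => p ^ 4 * f ^ 4 - 2 * p ^ 4 * f ^ 2 * h ^ 2 + p ^ 4 * h ^ 4 - 4 * p ^ 2 * q ^ 2 * c ^ 2 * h ^ 2 + 2 * p ^ 2 * q ^ 2 * f ^ 2 * g ^ 2 + 2 * p ^ 2 * q ^ 2 * f ^ 2 * h ^ 2 - 2 * p ^ 2 * q ^ 2 * f ^ 2 * x + 2 * p ^ 2 * q ^ 2 * g ^ 2 * h ^ 2 - 2 * p ^ 2 * q ^ 2 * h ^ 4 + 2 * p ^ 2 * q ^ 2 * h ^ 2 * x - 2 * p ^ 2 * r ^ 2 * c ^ 2 * f ^ 2 + 2 * p ^ 2 * r ^ 2 * c ^ 2 * h ^ 2 + 2 * p ^ 2 * r ^ 2 * f ^ 2 * g ^ 2 - 2 * p ^ 2 * r ^ 2 * g ^ 2 * h ^ 2 + 2 * p ^ 2 * s ^ 2 * c ^ 2 * f ^ 2 + 2 * p ^ 2 * s ^ 2 * c ^ 2 * h ^ 2 - 2 * p ^ 2 * s ^ 2 * f ^ 4 - 4 * p ^ 2 * s ^ 2 * f ^ 2 * g ^ 2 + 2 * p ^ 2 * s ^ 2 * f ^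 2 * h ^ 2 + 2 * p ^ 2 * s ^ 2 * f ^ 2 * x - 2 * p ^ 2 * s ^ 2 * h ^ 2 * x + 2 * p ^ 2 * c ^ 2 * f ^ 2 * h ^ 2 - 2 * p ^ 2 * c ^ 2 * h ^ 4 - 2 * p ^ 2 * f ^ 4 * g ^ 2 + 2 * p ^ 2 * f ^ 2 * g ^ 2 * h ^ 2 + q ^ 4 * g ^ 4 - 2 * q ^ 4 * g ^ 2 * h ^ 2 - 2 * q ^ 4 * g ^ 2 * x + q ^ 4 * h ^ 4 - 2 * q ^ 4 * h ^ 2 * x + q ^ 4 * x ^ 2 + 2 * q ^ 2 * r ^ 2 * c ^ 2 * g ^ 2 + 2 * q ^ 2 * r ^ 2 * c ^ 2 * h ^ 2 - 2 * q ^ 2 * r ^ 2 * c ^ 2 * x - 4 * q ^ 2 * r ^ 2 * f ^ 2 * g ^ 2 - 2 * q ^ 2 * r ^ 2 * g ^ 4 + 2 * q ^ 2 * r ^ 2 * g ^ 2 * h ^ 2 + 2 * q ^ 2 * r ^ 2 * g ^ 2 * x - 2 * q ^ 2 * s ^ 2 * c ^ 2 * g ^ 2 + 2 * q ^ 2 *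 s ^ 2 * c ^ 2 * h ^ 2 + 2 * q ^ 2 * s ^ 2 * c ^ 2 * x + 2 * q ^ 2 * s ^ 2 * f ^ 2 * g ^ 2 - 2 * q ^ 2 * s ^ 2 * f ^ 2 * h ^ 2 + 2 * q ^ 2 * s ^ 2 * f ^ 2 * x + 2 * q ^ 2 * s ^ 2 * g ^ 2 * x + 2 * q ^ 2 * s ^ 2 * h ^ 2 * x - 2 * q ^ 2 * s ^ 2 * x ^ 2 + 2 * q ^ 2 * c ^ 2 * g ^ 2 * h ^ 2 - 2 * q ^ 2 * c ^ 2 * h ^ 4 + 2 * q ^ 2 * c ^ 2 * h ^ 2 * x - 2 * q ^ 2 * f ^ 2 * g ^ 4 + 2 * q ^ 2 * f ^ 2 * g ^ 2 * h ^ 2 + 2 * q ^ 2 * f ^ 2 * g ^ 2 * x - 4 * q ^ 2 * g ^ 2 * h ^ 2 * x + r ^ 4 * c ^ 4 - 2 * r ^ 4 * c ^ 2 * g ^ 2 + r ^ 4 * g ^ 4 - 2 * r ^ 2 * s ^ 2 * c ^ 4 + 2 * r ^ 2 * s ^ 2 * c ^ 2 * f ^ 2 + 2 * r ^ 2 * s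 ^ 2 * c ^ 2 * g ^ 2 - 4 * r ^ 2 * s ^ 2 * c ^ 2 * h ^ 2 + 2 * r ^ 2 * s ^ 2 * c ^ 2 * x + 2 * r ^ 2 * s ^ 2 * f ^ 2 * g ^ 2 - 2 * r ^ 2 * s ^ 2 * g ^ 2 * x - 2 * r ^ 2 * c ^ 4 * h ^ 2 + 2 * r ^ 2 * c ^ 2 * f ^ 2 * g ^ 2 + 2 * r ^ 2 * c ^ 2 * g ^ 2 * h ^ 2 - 2 * r ^ 2 * f ^ 2 * g ^ 4 + s ^ 4 * c ^ 4 - 2 * s ^ 4 * c ^ 2 * f ^ 2 - 2 * s ^ 4 * c ^ 2 * x + s ^ 4 * f ^ 4 - 2 * s ^ 4 * f ^ 2 * x + s ^ 4 * x ^ 2 - 2 * s ^ 2 * c ^ 4 * h ^ 2 + 2 * s ^ 2 * c ^ 2 * f ^ 2 * g ^ 2 + 2 * s ^ 2 * c ^ 2 * f ^ 2 * h ^ 2 - 4 * s ^ 2 * c ^ 2 * f ^ 2 * x + 2 * s ^ 2 * c ^ 2 * h ^ 2 * x - 2 * s ^ 2 * f ^ 4 * g ^ 2 + 2 * s ^ 2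 * f ^ 2 * g ^ 2 * x + c ^ 4 * h ^ 4 - 2 * c ^ 2 * f ^ 2 * g ^ 2 * h ^ 2 + f ^ 4 * g ^ 4, fun x y => ?_, fun x => ?_⟩
  · rw [Matrix.det_succ_row_zero]
    simp only [Fin.sum_univ_succ, Fin.sum_univ_zero, my_det_fin_5, Matrix.submatrix_apply,
      (show ((0:Fin 6).succAbove 0) = 1 from rfl), (show ((0:Fin 6).succAbove 1) = 2 from rfl), (show ((0:Fin 6).succAbove 2) = 3 from rfl), (show ((0:Fin 6).succAbove 3) = 4 from rfl), (show ((0:Fin 6).succAbove 4) = 5 from rfl), (show ((1:Fin 6).succAbove 0) = 0 from rfl), (show ((1:Fin 6).succAbove 1) = 2 from rfl), (show ((1:Fin 6).succAbove 2) = 3 from rfl), (show ((1:Fin 6).succAbove 3) = 4 from rfl), (show ((1:Fin 6).succAbove 4) = 5 from rfl), (show ((2:Fin 6).succAbove 0) = 0 from rfl), (show ((2:Fin 6).succAbove 1) = 1 from rfl), (show ((2:Fin 6).succAbove 2) = 3 from rfl), (show ((2:Fin 6).succAbove 3) = 4 from rfl), (show ((2:Fin 6).succAbove 4) = 5 from rfl),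 (show ((3:Fin 6).succAbove 0) = 0 from rfl), (show ((3:Fin 6).succAbove 1) = 1 from rfl), (show ((3:Fin 6).succAbove 2) = 2 from rfl), (show ((3:Fin 6).succAbove 3) = 4 from rfl), (show ((3:Fin 6).succAbove 4) = 5 from rfl), (show ((4:Fin 6).succAbove 0) = 0 from rfl), (show ((4:Fin 6).succAbove 1) = 1 from rfl), (show ((4:Fin 6).succAbove 2) = 2 from rfl), (show ((4:Fin 6).succAbove 3) = 3 from rfl), (show ((4:Fin 6).succAbove 4) = 5 from rfl), (show ((5:Fin 6).succAbove 0) = 0 from rfl), (show ((5:Fin 6).succAbove 1) = 1 from rfl), (show ((5:Fin 6).succAbove 2) = 2 from rfl), (show ((5:Fin 6).succAbove 3) = 3 from rfl), (show ((5:Fin 6).succAbove 4) = 4 from rfl), (show (Fin.succ (0:Fin 1)) = 1 from rfl), (show (Fin.succ (0:Fin 2)) = 1 from rfl), (show (Fin.succ (1:Fin 2)) = 2 from rfl), (show (Fin.succ (0:Fin 3)) = 1 from rfl), (show (Fin.succ (1:Fin 3)) = 2 from rfl), (show (Fin.succ (2:Fin 3)) = 3 from rfl), (show (Fin.succ (0:Fin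 4)) = 1 from rfl), (show (Fin.succ (1:Fin 4)) = 2 from rfl), (show (Fin.succ (2:Fin 4)) = 3 from rfl), (show (Fin.succ (3:Fin 4)) = 4 from rfl), (show (Fin.succ (0:Fin 5)) = 1 from rfl), (show (Fin.succ (1:Fin 5)) = 2 from rfl), (show (Fin.succ (2:Fin 5)) = 3 from rfl), (show (Fin.succ (3:Fin 5)) = 4 from rfl), (show (Fin.succ (4:Fin 5)) = 5 from rfl), (show ((0:Fin 6):ℕ) = 0 from rfl), (show ((1:Fin 6):ℕ) = 1 from rfl), (show ((2:Fin 6):ℕ) = 2 from rfl), (show ((3:Fin 6):ℕ) = 3 from rfl), (show ((4:Fin 6):ℕ) = 4 from rfl), (show ((5:Fin 6):ℕ) = 5 from rfl),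
      Matrix.cons_val', Matrix.cons_val_zero, Matrix.cons_val_one, Matrix.cons_val_two,
      Matrix.cons_val_three, Matrix.cons_val_four, my_cons_val_five, Matrix.head_cons,
      Matrix.tail_cons, Matrix.head_fin_const, Matrix.empty_val', Matrix.cons_val_fin_one,
      Matrix.of_apply]
    ring
  · ring
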